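/- Let p be a prime and let e be the entry point of the Fibonacci sequence modulo p. Then for n = 2k, R_n^e ≡ (-1)^((k+1)e) F_{e-1} · I_n (mod p), and for n = 2k+1, R_n^e ≡ (-1)^(ke) · I_n (mod p). -/

import Mathlib

open MvPolynomial Finset

namespace RmatAux

variable {R : Type} [CommRing R]

/-- the linear form attached to column `t` of `K`. -/
noncomputable def lin (K : Matrix (Fin 2) (Fin 2) R) (t : Fin 2) : MvPolynomial (Fin 2) R :=
  C (K 0 t) * X 0 + C (K 1 t) * X 1

/-- symmetric power basis image. -/
noncomputable def Hp (n : ℕ) (K : Matrix (Fin 2) (Fin 2) R) (i : ℕ) : MvPolynomial (Fin 2) R :=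
  (lin K 0) ^ i * (lin K 1) ^ (n - 1 - i)

noncomputable def mono2 (n j : ℕ) : Fin 2 →₀ ℕ := Finsupp.single 0 j + Finsupp.single 1 (n - 1 - j)

/-- induced matrix on the symmetric power. -/
noncomputable def Phi (n : ℕ) (K : Matrix (Fin 2) (Fin 2) R) : Matrix (Fin n) (Fin n) R :=
  Matrix.of fun i j => coeff (mono2 n j.1) (Hp n K i.1)

lemma mono2_apply_zero (n j : ℕ) : mono2 n j 0 = j := by
  simp [mono2, Finsupp.single_apply]

lemma mono2_apply_one (n j : ℕ) : mono2 n j 1 = n - 1 - j := by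
  simp [mono2, Finsupp.single_apply]

lemma monomial_mono2 (n j : ℕ) (c : R) :
    (monomial (mono2 n j) c : MvPolynomial (Fin 2) R) = C c * X 0 ^ j * X 1 ^ (n - 1 - j) := by
  rw [C_apply, X_pow_eq_monomial, X_pow_eq_monomial, monomial_mul, monomial_mul]
  simp [mono2]

lemma aeval_lin (M N : Matrix (Fin 2) (Fin 2) R) (t : Fin 2) :
    aeval (lin M) (lin N t) = lin (M * N) t := by
  simp only [lin, map_add, map_mul, aeval_C, aeval_X, Matrix.mul_apply, Fin.sum_univ_two]
  simp only [algebraMap_eq]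
  ring

lemma lin_isHomogeneous (K : Matrix (Fin 2) (Fin 2) R) (t : Fin 2) :
    (lin K t).IsHomogeneous 1 := by
  exact ((isHomogeneous_X R 0).C_mul _).add ((isHomogeneous_X R 1).C_mul _)

lemma Hp_isHomogeneous (n : ℕ) (K : Matrix (Fin 2) (Fin 2) R) (i : ℕ) (hi : i ≤ n - 1) :
    (Hp n K i).IsHomogeneous (n - 1) := by
  have := ((lin_isHomogeneous K 0).pow i).mul ((lin_isHomogeneous K 1).pow (n - 1 - i))
  simpa [Hp, Nat.add_sub_cancel' hi] using this

lemma degree_fin2 (d : Fin 2 →₀ ℕ) : d.degree = d 0 + d 1 := by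
  rw [Finsupp.degree_apply]
  rw [Finset.sum_subset (Finset.subset_univ _)
    (fun x _ hx => Finsupp.notMem_support_iff.mp hx)]
  exact Fin.sum_univ_two d

/-- expansion of a homogeneous polynomial of degree n-1 in two variables. -/
lemma homog_expand (n : ℕ) (hn : 1 ≤ n) (h : MvPolynomial (Fin 2) R)
    (hh : h.IsHomogeneous (n - 1)) :
    h = ∑ j ∈ Finset.range n, C (coeff (mono2 n j) h) * X 0 ^ j * X 1 ^ (n - 1 - j) := by
  have hsub : h.support ⊆ (Finset.range n).image (mono2 n) := by
    intro d hd
    have hdeg : d.degree = n - 1 := by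
      by_contra hne
      exact (MvPolynomial.mem_support_iff.mp hd) (hh.coeff_eq_zero hne)
    rw [degree_fin2] at hdeg
    refine Finset.mem_image.mpr ⟨d 0, Finset.mem_range.mpr (by omega), ?_⟩
    ext t
    fin_cases t <;> simp [mono2, Finsupp.single_apply] <;> omega
  have hinj : ∀ a ∈ Finset.range n, ∀ b ∈ Finset.range n,
      mono2 n a = mono2 n b → a = b := by
    intro a _ b _ hab
    have := congrArg (fun f => f 0) hab
    simpa [mono2_apply_zero] using this
  conv_lhs => rw [← support_sum_monomial_coeff h]
  rw [Finset.sum_subset hsub (by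
    intro d _ hd
    rw [MvPolynomial.notMem_support_iff.mp hd, map_zero])]
  rw [Finset.sum_image hinj]
  exact Finset.sum_congr rfl fun j _ => monomial_mono2 n j _

lemma Phi_mul (n : ℕ) (M N : Matrix (Fin 2) (Fin 2) R) :
    Phi n (M * N) = Phi n N * Phi n M := by
  ext i j
  have key : Hp n (M * N) i.1 = ∑ l ∈ Finset.range n,
      C (coeff (mono2 n l) (Hp n N i.1)) * Hp n M l := by
    have h1 : Hp n (M * N) i.1 = aeval (lin M) (Hp n N i.1) := by
      simp only [Hp, map_mul, map_pow, aeval_lin]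
    have hi := i.isLt
    rw [h1]
    conv_lhs => rw [homog_expand n (by omega) (Hp n N i.1)
      (Hp_isHomogeneous n N i.1 (by omega))]
    rw [map_sum]
    refine Finset.sum_congr rfl fun l _ => ?_
    simp only [map_mul, map_pow, aeval_C, aeval_X, algebraMap_eq, Hp, mul_assoc]
  simp only [Phi, Matrix.of_apply, Matrix.mul_apply, key, coeff_sum, coeff_C_mul]
  rw [← Fin.sum_univ_eq_sum_range (fun l => coeff (mono2 n l) (Hp n N i.1) *
      coeff (mono2 n j.1) (Hp n M l)) n]

lemma Phi_one (n : ℕ) : Phi n (1 : Matrix (Fin 2) (Fin 2) R) = 1 := by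
  ext i j
  have hlin : ∀ t : Fin 2, lin (1 : Matrix (Fin 2) (Fin 2) R) t = X t := by
    intro t
    fin_cases t <;> simp [lin, Matrix.one_apply]
  simp only [Phi, Matrix.of_apply, Hp, hlin]
  rw [show (X 0 : MvPolynomial (Fin 2) R) ^ i.1 * X 1 ^ (n - 1 - i.1)
      = monomial (mono2 n i.1) 1 by
    rw [monomial_mono2]; simp]
  rw [coeff_monomial, Matrix.one_apply]
  congr 1
  simp only [eq_iff_iff]
  constructor
  · intro h
    have := congrArg (fun f => f 0) h
    simp only [mono2_apply_zero] at this
    exact Fin.ext (by omega)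
  · intro h; rw [h]

lemma Phi_pow (n : ℕ) (K : Matrix (Fin 2) (Fin 2) R) (m : ℕ) :
    Phi n (K ^ m) = Phi n K ^ m := by
  induction m with
  | zero => simpa using Phi_one n
  | succ m ih => rw [pow_succ, Phi_mul, ih, ← pow_succ']

lemma Phi_smul_one (n : ℕ) (hn : 1 ≤ n) (c : R) :
    Phi n (c • (1 : Matrix (Fin 2) (Fin 2) R)) = c ^ (n - 1) • (1 : Matrix (Fin n) (Fin n) R) := by
  have hlin : ∀ t : Fin 2, lin (c • (1 : Matrix (Fin 2) (Fin 2) R)) t = C c * X t := by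
    intro t
    fin_cases t <;> simp [lin, Matrix.one_apply] <;> ring
  ext i j
  have : Hp n (c • (1 : Matrix (Fin 2) (Fin 2) R)) i.1
      = C (c ^ (n - 1)) * Hp n (1 : Matrix (Fin 2) (Fin 2) R) i.1 := by
    have h1t : ∀ t : Fin 2, lin (1 : Matrix (Fin 2) (Fin 2) R) t = X t := by
      intro t; fin_cases t <;> simp [lin, Matrix.one_apply]
    simp only [Hp, hlin, h1t, mul_pow, ← C_pow]
    rw [show C (c ^ i.1) * X 0 ^ i.1 * (C (c ^ (n - 1 - i.1)) * (X 1:MvPolynomial (Fin 2) R) ^ (n - 1 - i.1))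
        = C (c ^ i.1) * C (c ^ (n - 1 - i.1)) * (X 0 ^ i.1 * X 1 ^ (n - 1 - i.1)) from by ring,
      ← C_mul, ← pow_add, show i.1 + (n - 1 - i.1) = n - 1 from by omega]
  simp only [Phi, Matrix.of_apply]
  rw [this, coeff_C_mul, Matrix.smul_apply, smul_eq_mul]
  congr 1
  have h := congrFun (congrFun (Phi_one (R := R) n) i) j
  simpa [Phi] using h

lemma pair_eq_iff (a b c d : ℕ) :
    (Finsupp.single (0 : Fin 2) a + Finsupp.single 1 b
      = Finsupp.single (0 : Fin 2) c + Finsupp.single 1 d) ↔ a = c ∧ b = d := by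
  constructor
  · intro h
    have h0 := congrArg (fun f => f 0) h
    have h1 := congrArg (fun f => f 1) h
    simp [Finsupp.single_apply] at h0 h1
    exact ⟨h0, h1⟩
  · rintro ⟨rfl, rfl⟩; rfl

lemma monomial_pair (a b : ℕ) (c : R) :
    (monomial (Finsupp.single (0 : Fin 2) a + Finsupp.single 1 b) c : MvPolynomial (Fin 2) R)
      = C c * X 0 ^ a * X 1 ^ b := by
  rw [C_apply, X_pow_eq_monomial, X_pow_eq_monomial, monomial_mul, monomial_mul]
  simp

lemma coeff_fib_entry (n i j : ℕ) (hi : i < n) (hj : j < n) :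
    coeff (Finsupp.single (0 : Fin 2) j + Finsupp.single 1 (n - 1 - j))
      ((X 0 + X 1 : MvPolynomial (Fin 2) R) ^ i * X 0 ^ (n - 1 - i))
      = (Nat.choose i (n - 1 - j) : R) := by
  rw [add_pow, Finset.sum_mul]
  have hterm : ∀ m : ℕ, (X 0 : MvPolynomial (Fin 2) R) ^ m * X 1 ^ (i - m)
      * (Nat.choose i m : MvPolynomial (Fin 2) R) * X 0 ^ (n - 1 - i)
      = monomial (Finsupp.single (0 : Fin 2) (m + (n - 1 - i)) + Finsupp.single 1 (i - m))
          (Nat.choose i m : R) := by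
    intro m
    rw [show ((Nat.choose i m : ℕ) : MvPolynomial (Fin 2) R) = C (Nat.choose i m : R) from by
      push_cast; rfl]
    rw [monomial_pair, pow_add]
    ring
  simp only [hterm, coeff_sum, coeff_monomial]
  by_cases hc : n - 1 - j ≤ i
  · rw [Finset.sum_eq_single (i - (n - 1 - j))]
    · rw [if_pos (by rw [pair_eq_iff]; omega), Nat.choose_symm hc]
    · intro m hm hne
      rw [if_neg]
      rw [pair_eq_iff]
      simp only [Finset.mem_range] at hm
      omega
    · intro h
      exact absurd (Finset.mem_range.mpr (by omega)) h
  · rw [Finset.sum_eq_zero, show (Nat.choose i (n - 1 - j) : R) = 0 from by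
      rw [Nat.choose_eq_zero_of_lt (by omega)]; simp]
    intro m hm
    simp only [Finset.mem_range] at hm
    rw [if_neg]
    rw [pair_eq_iff]
    omega

lemma cassini : ∀ m : ℕ, (Nat.fib m : R) * Nat.fib (m + 2) + (-1 : R) ^ m
    = (Nat.fib (m + 1) : R) ^ 2 := by
  intro m
  induction m with
  | zero => simp
  | succ m ih =>
    have h2 : (Nat.fib (m + 3) : R) = Nat.fib (m + 2) + Nat.fib (m + 1) := by
      rw [show m + 3 = (m + 1) + 2 from rfl, Nat.fib_add_two]
      push_cast; ring
    have h1 : (Nat.fib (m + 2) : R) = Nat.fib m + Nat.fib (m + 1) := by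
      rw [Nat.fib_add_two]; push_cast; ring
    rw [h1] at h2 ih
    rw [show m + 1 + 2 = m + 3 from rfl, h2, h1]
    linear_combination (-1 : R) * ih

lemma fibK_pow (m : ℕ) : (!![1, 1; 1, 0] : Matrix (Fin 2) (Fin 2) R) ^ m
    = !![(Nat.fib (m + 1) : R), Nat.fib m; Nat.fib m, (Nat.fib (m + 1) : R) - Nat.fib m] := by
  induction m with
  | zero => simp [Matrix.one_fin_two]
  | succ m ih =>
    rw [pow_succ, ih]
    have hf : (Nat.fib (m + 2) : R) = Nat.fib m + Nat.fib (m + 1) := by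
      rw [Nat.fib_add_two]; push_cast; ring
    ext a b
    fin_cases a <;> fin_cases b <;>
      simp [Matrix.mul_apply, Fin.sum_univ_two, hf] <;> ring

lemma fib_matrix_entry (n : ℕ) (i j : Fin n) :
    Phi n (!![1, 1; 1, 0] : Matrix (Fin 2) (Fin 2) R) i j = (Nat.choose i.1 (n - 1 - j.1) : R) := by
  have h0 : lin (!![1, 1; 1, 0] : Matrix (Fin 2) (Fin 2) R) 0 = X 0 + X 1 := by
    simp [lin]
  have h1 : lin (!![1, 1; 1, 0] : Matrix (Fin 2) (Fin 2) R) 1 = X 0 := by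
    simp [lin]
  simp only [Phi, Matrix.of_apply, Hp, h0, h1, mono2]
  exact coeff_fib_entry n i.1 j.1 i.isLt j.isLt

end RmatAux

/-- `R n` over `ZMod p`: the `n × n` matrix whose 1-based `(i,j)` entry is `C(i-1, n-j)`. -/
def RmatMod (p n : ℕ) : Matrix (Fin n) (Fin n) (ZMod p) :=
  Matrix.of fun i j => (Nat.choose i.1 (n - 1 - j.1) : ZMod p)

open RmatAux in
/-- The main computation: if `p ∣ fib e` then `R_n^e = fib(e-1)^(n-1) • 1` over `ZMod p`. -/
lemma RmatMod_pow_eq (p e n : ℕ) (he : 0 < e) (hdvd : p ∣ Nat.fib e) (hn : 1 ≤ n) :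
    RmatMod p n ^ e = ((Nat.fib (e - 1) : ZMod p) ^ (n - 1)) •
      (1 : Matrix (Fin n) (Fin n) (ZMod p)) := by
  have hfe : (Nat.fib e : ZMod p) = 0 := by
    exact_mod_cast (ZMod.natCast_eq_zero_iff _ _).mpr hdvd
  have hfe1 : (Nat.fib (e + 1) : ZMod p) = (Nat.fib (e - 1) : ZMod p) := by
    have : e + 1 = (e - 1) + 2 := by omega
    rw [this, Nat.fib_add_two, show e - 1 + 1 = e from by omega]
    push_cast
    rw [hfe, add_zero]
  have hR : RmatMod p n = Phi n (!![1, 1; 1, 0] : Matrix (Fin 2) (Fin 2) (ZMod p)) := by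
    ext i j
    rw [fib_matrix_entry]
    rfl
  have hKe : (!![1, 1; 1, 0] : Matrix (Fin 2) (Fin 2) (ZMod p)) ^ e
      = (Nat.fib (e - 1) : ZMod p) • (1 : Matrix (Fin 2) (Fin 2) (ZMod p)) := by
    rw [fibK_pow, hfe, hfe1]
    ext a b
    fin_cases a <;> fin_cases b <;> simp [Matrix.one_apply]
  rw [hR, ← Phi_pow, hKe, Phi_smul_one n hn]

/-- Let `e` be the entry point of the Fibonacci sequence modulo the prime `p`. Then
`R_{2k}^e ≡ (-1)^((k+1)e) F_{e-1} I (mod p)` and `R_{2k+1}^e ≡ (-1)^(ke) I (mod p)`. -/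
theorem Rmat_pow_entry_point_parity (p e : ℕ) (hp : p.Prime)
    (he : 0 < e) (hdvd : p ∣ Nat.fib e)
    (hmin : ∀ m : ℕ, 0 < m → m < e → ¬ p ∣ Nat.fib m) (k : ℕ) :
    RmatMod p (2 * k) ^ e =
        (((-1 : ZMod p) ^ ((k + 1) * e) * (Nat.fib (e - 1) : ZMod p)) •
          (1 : Matrix (Fin (2 * k)) (Fin (2 * k)) (ZMod p))) ∧
      RmatMod p (2 * k + 1) ^ e =
        (((-1 : ZMod p) ^ (k * e)) •
          (1 : Matrix (Fin (2 * k + 1)) (Fin (2 * k + 1)) (ZMod p))) := by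
  have hfe : (Nat.fib e : ZMod p) = 0 := by
    exact_mod_cast (ZMod.natCast_eq_zero_iff _ _).mpr hdvd
  have hfe1 : (Nat.fib (e + 1) : ZMod p) = (Nat.fib (e - 1) : ZMod p) := by
    rw [show e + 1 = (e - 1) + 2 from by omega, Nat.fib_add_two,
      show e - 1 + 1 = e from by omega]
    push_cast
    rw [hfe, add_zero]
  have hsq : (Nat.fib (e - 1) : ZMod p) ^ 2 = (-1 : ZMod p) ^ e := by
    have hc := RmatAux.cassini (R := ZMod p) (e - 1)
    rw [show e - 1 + 2 = e + 1 from by omega, show e - 1 + 1 = e from by omega,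
      hfe, hfe1] at hc
    have hpw : (-1 : ZMod p) ^ e = (-1) ^ (e - 1) * (-1) := by
      conv_lhs => rw [show e = (e - 1) + 1 from by omega]
      rw [pow_succ]
    rw [hpw]
    linear_combination hc
  constructor
  · rcases Nat.eq_zero_or_pos k with rfl | hk
    · ext i j
      exact absurd i.isLt (by omega)
    · rw [RmatMod_pow_eq p e (2 * k) he hdvd (by omega)]
      congr 1
      have h1 : (Nat.fib (e - 1) : ZMod p) ^ (2 * k - 1)
          = ((-1 : ZMod p) ^ e) ^ (k - 1) * (Nat.fib (e - 1) : ZMod p) := by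
        rw [show 2 * k - 1 = 2 * (k - 1) + 1 from by omega, pow_succ, pow_mul, hsq]
      have h2 : ((-1 : ZMod p)) ^ ((k + 1) * e) = ((-1 : ZMod p) ^ e) ^ (k - 1) := by
        rw [show (k + 1) * e = (k - 1) * e + 2 * e from by
            rw [show k + 1 = (k - 1) + 2 from by omega, add_mul], pow_add]
        have h3 : ((-1 : ZMod p)) ^ (2 * e) = 1 := by
          rw [pow_mul]
          norm_num
        rw [h3, mul_one, mul_comm (k - 1) e, pow_mul]
      rw [h1, h2]
  · rw [RmatMod_pow_eq p e (2 * k + 1) he hdvd (by omega)]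
    congr 1
    rw [show 2 * k + 1 - 1 = 2 * k from rfl, pow_mul, hsq, ← pow_mul, mul_comm e k]
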